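/- Let S be an additively cancellative hemiring with S^{n+1} = {o} for some n ≥ 1 (every product of n+1 elements is o). Then for every polynomial function p of S in variables x₁,…,xₙ,y (built from +, ·, variables, and constants) and all tuples a₁,…,aₙ,b₁,…,bₙ,c,d: if p(v(x₁),…,v(xₙ),c) = p(v(x₁),…,v(xₙ),d) for every valuation v assigning each xᵢ either aᵢ or bᵢ, except possibly the valuation assigning all bᵢ, then p(b₁,…,bₙ,c) = p(b₁,…,bₙ,d). -/

import Mathlib

/-- Product of the `n+1` elements `f 0 * f 1 * ⋯ * f n` (no unit needed). -/
def finProd {S : Type*} [Mul S] : {n : ℕ} → (Fin (n + 1) → S) → S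
  | 0, f => f 0
  | _ + 1, f => f 0 * finProd (fun i => f i.succ)

/-- Polynomial functions of a hemiring: generated from projections and constants
by pointwise `+` and `*`. -/
inductive IsPolyFn (S : Type*) [Add S] [Mul S] (ι : Type*) : ((ι → S) → S) → Prop
  | proj (i : ι) : IsPolyFn S ι (fun x => x i)
  | const (c : S) : IsPolyFn S ι (fun _ => c)
  | add {p q} : IsPolyFn S ι p → IsPolyFn S ι q → IsPolyFn S ι (fun x => p x + q x)
  | mul {p q} : IsPolyFn S ι p → IsPolyFn S ι q → IsPolyFn S ι (fun x => p x * q x)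

namespace SNP
variable {S : Type*} [NonUnitalSemiring S]

/-- right-nested product `x * (l₀ * (l₁ * ⋯))` -/
def myProd : S → List S → S
  | x, [] => x
  | x, y :: l => x * myProd y l

lemma myProd_append (x : S) (l₁ : List S) (y : S) (l₂ : List S) :
    myProd x (l₁ ++ y :: l₂) = myProd x l₁ * myProd y l₂ := by
  induction l₁ generalizing x with
  | nil => rfl
  | cons z l ih => simp [myProd, ih, mul_assoc]

lemma myProd_eq_finProd (x : S) (l : List S) :
    myProd x l = finProd (n := l.length) (fun i => (x :: l).get (Fin.cast (by simp) i)) := by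
  induction l generalizing x with
  | nil => rfl
  | cons y l ih =>
    show x * myProd y l = _
    rw [ih y]
    show _ = _ * finProd _
    congr 1

variable {n : ℕ}

lemma myProd_zero_of_len_eq (hpow : ∀ f : Fin (n + 1) → S, finProd f = 0)
    (x : S) (l : List S) (h : l.length = n) : myProd x l = 0 := by
  subst h; rw [myProd_eq_finProd]; exact hpow _

lemma myProd_zero_of_long (hpow : ∀ f : Fin (n + 1) → S, finProd f = 0)
    (x : S) (l : List S) (h : n ≤ l.length) : myProd x l = 0 := by
  have hsplit : l = l.take n ++ l.drop n := (List.take_append_drop n l).symm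
  have hlen : (l.take n).length = n := by simp [List.length_take]; omega
  rcases hd : l.drop n with _ | ⟨y, l₂⟩
  · have h2 : l = l.take n := by conv_lhs => rw [hsplit, hd, List.append_nil]
    conv_lhs => rw [h2]
    exact myProd_zero_of_len_eq hpow x _ hlen
  · rw [hsplit, hd, myProd_append, myProd_zero_of_len_eq hpow x _ hlen, zero_mul]

variable {ι : Type*}

def fval (x : ι → S) : ι ⊕ S → S
  | .inl i => x i
  | .inr c => c

/-- value of a monomial (a nonempty list of factors, as head + tail) -/
def mval (x : ι → S) (M : (ι ⊕ S) × List (ι ⊕ S)) : S :=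
  myProd (fval x M.1) (M.2.map (fval x))

def pval (x : ι → S) (L : List ((ι ⊕ S) × List (ι ⊕ S))) : S :=
  (L.map (mval x)).sum

lemma pval_append (x : ι → S) (L₁ L₂ : List ((ι ⊕ S) × List (ι ⊕ S))) :
    pval x (L₁ ++ L₂) = pval x L₁ + pval x L₂ := by
  simp [pval]

lemma sum_map_mul_right (l : List α) (f : α → S) (s : S) :
    (l.map f).sum * s = (l.map (fun a => f a * s)).sum := by
  induction l with
  | nil => simp
  | cons a l ih => simp [add_mul, ih]

lemma sum_map_mul_left (l : List α) (f : α → S) (s : S) :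
    s * (l.map f).sum = (l.map (fun a => s * f a)).sum := by
  induction l with
  | nil => simp
  | cons a l ih => simp [mul_add, ih]

def mmul (M N : (ι ⊕ S) × List (ι ⊕ S)) : (ι ⊕ S) × List (ι ⊕ S) :=
  (M.1, M.2 ++ N.1 :: N.2)

lemma mval_mmul (x : ι → S) (M N : (ι ⊕ S) × List (ι ⊕ S)) :
    mval x (mmul M N) = mval x M * mval x N := by
  simp [mval, mmul, myProd_append]

lemma pval_mul (x : ι → S) (L₁ L₂ : List ((ι ⊕ S) × List (ι ⊕ S))) :
    pval x L₁ * pval x L₂ = pval x (L₁.flatMap (fun M => L₂.map (mmul M))) := by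
  induction L₁ with
  | nil => simp [pval]
  | cons M L ih =>
    simp only [List.flatMap_cons, pval, List.map_cons, List.sum_cons, List.map_append,
      List.sum_append, add_mul]
    rw [show (List.map (mval x) L).sum * (List.map (mval x) L₂).sum
        = ((L.flatMap fun M => L₂.map (mmul M)).map (mval x)).sum from ih]
    congr 1
    rw [sum_map_mul_left, List.map_map]
    exact congrArg List.sum (List.map_congr_left fun N _ => ((mval_mmul x M N).symm : _))

lemma exists_normal (p : (ι → S) → S) (hp : IsPolyFn S ι p) :
    ∃ L : List ((ι ⊕ S) × List (ι ⊕ S)), ∀ x, p x = pval x L := by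
  induction hp with
  | proj i => exact ⟨[(.inl i, [])], fun x => by simp [pval, mval, myProd, fval]⟩
  | const c => exact ⟨[(.inr c, [])], fun x => by simp [pval, mval, myProd, fval]⟩
  | @add p₁ q₁ hp hq ihp ihq =>
    obtain ⟨L₁, h₁⟩ := ihp; obtain ⟨L₂, h₂⟩ := ihq
    exact ⟨L₁ ++ L₂, fun x => by simp only [pval_append]; rw [← h₁, ← h₂]⟩
  | @mul p₁ q₁ hp hq ihp ihq =>
    obtain ⟨L₁, h₁⟩ := ihp; obtain ⟨L₂, h₂⟩ := ihq
    refine ⟨L₁.flatMap (fun M => L₂.map (mmul M)), fun x => ?_⟩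
    show p₁ x * q₁ x = _
    rw [← pval_mul, ← h₁, ← h₂]

lemma sum_map_filter_of_zero {α : Type*} (l : List α) (f : α → S) (q : α → Bool)
    (h : ∀ a ∈ l, q a = false → f a = 0) :
    (l.map f).sum = ((l.filter q).map f).sum := by
  induction l with
  | nil => simp
  | cons a l ih =>
    rcases hq : q a with _ | _
    · simp [List.filter_cons, hq, h a (by simp) hq,
        ih (fun a ha => h a (by simp [ha]))]
    · simp [List.filter_cons, hq, ih (fun a ha => h a (by simp [ha]))]

lemma pval_filter (hpow : ∀ f : Fin (n + 1) → S, finProd f = 0)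
    (x : ι → S) (L : List ((ι ⊕ S) × List (ι ⊕ S))) :
    pval x L = pval x (L.filter (fun M => M.2.length < n)) := by
  apply sum_map_filter_of_zero
  intro M _ hq
  have : n ≤ (M.2.map (fval x)).length := by
    simp only [List.length_map]
    simpa using hq
  exact myProd_zero_of_long hpow _ _ this

lemma mval_congr (x x' : ι → S) (M : (ι ⊕ S) × List (ι ⊕ S))
    (h : ∀ f ∈ M.1 :: M.2, fval x f = fval x' f) :
    mval x M = mval x' M := by
  unfold mval
  rw [h M.1 (by simp), List.map_congr_left (fun f hf => h f (by simp [hf]))]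

section main
variable {n m : ℕ} {k : Fin n → ℕ}

abbrev Idx (n m : ℕ) (k : Fin n → ℕ) : Type := (Σ i : Fin n, Fin (k i)) ⊕ Fin m

/-- the "direction" of a factor -/
def grp : (Idx n m k ⊕ S) → Option (Fin (n + 1))
  | .inl (.inl z) => some z.1.castSucc
  | .inl (.inr _) => some (Fin.last n)
  | .inr _ => none

lemma exists_unused (M : (Idx n m k ⊕ S) × List (Idx n m k ⊕ S)) (hlen : M.2.length < n) :
    ∃ j : Fin (n + 1), ∀ f ∈ M.1 :: M.2, grp f ≠ some j := by
  set l : List (Idx n m k ⊕ S) := M.1 :: M.2 with hl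
  have hcard : (l.filterMap grp).toFinset.card < n + 1 := by
    have h1 := List.toFinset_card_le (l.filterMap grp)
    have h2 := l.length_filterMap_le grp
    have h3 : l.length = M.2.length + 1 := by simp [hl]
    omega
  obtain ⟨j, hj⟩ : ∃ j : Fin (n + 1), j ∉ (l.filterMap grp).toFinset := by
    by_contra hcon
    push_neg at hcon
    have : (Finset.univ : Finset (Fin (n + 1))).card ≤ ((l.filterMap grp).toFinset).card :=
      Finset.card_le_card (fun j _ => hcon j)
    simp at this
    omega
  exact ⟨j, fun f hf hgf => hj (by
    rw [List.mem_toFinset, List.mem_filterMap]; exact ⟨f, hf, hgf⟩)⟩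

variable (a b : ∀ i : Fin n, Fin (k i) → S) (c d : Fin m → S)

def asg (t : (Fin n → Bool) × Bool) : Idx n m k → S :=
  Sum.elim (fun z => if t.1 z.1 then b z.1 z.2 else a z.1 z.2) (if t.2 then c else d)

def par (t : (Fin n → Bool) × Bool) : ZMod 2 :=
  (∑ i : Fin n, if t.1 i then (1 : ZMod 2) else 0) + (if t.2 then 1 else 0)

def flipt (j : Fin (n + 1)) (t : (Fin n → Bool) × Bool) : (Fin n → Bool) × Bool :=
  if h : (j : ℕ) < n then (Function.update t.1 ⟨j, h⟩ (! t.1 ⟨j, h⟩), t.2) else (t.1, ! t.2)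

lemma flipt_flipt (j : Fin (n + 1)) (t : (Fin n → Bool) × Bool) :
    flipt j (flipt j t) = t := by
  unfold flipt
  split
  · simp
  · simp

lemma par_flipt (j : Fin (n + 1)) (t : (Fin n → Bool) × Bool) :
    par (flipt j t) = par t + 1 := by
  unfold par flipt
  split
  case isTrue h =>
    simp only
    rw [← Finset.add_sum_erase _ (fun x => if Function.update t.1 ⟨j, h⟩ (! t.1 ⟨j, h⟩) x then (1 : ZMod 2) else 0) (Finset.mem_univ ⟨j, h⟩),
        ← Finset.add_sum_erase _ (fun x => if t.1 x then (1 : ZMod 2) else 0) (Finset.mem_univ ⟨j, h⟩)]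
    rw [Finset.sum_congr rfl (fun x hx => by
      rw [Function.update_of_ne (Finset.ne_of_mem_erase hx)])]
    have h2 : (2:ZMod 2) = 0 := by decide
    cases hb : t.1 ⟨j, h⟩ <;> simp [hb] <;> first | linear_combination -h2 | linear_combination h2 | ring
  case isFalse h =>
    simp only
    have h2 : (2:ZMod 2) = 0 := by decide
    cases hb : t.2 <;> simp [hb] <;> first | linear_combination -h2 | linear_combination h2 | ring

lemma fval_asg_flipt (j : Fin (n + 1)) (t : (Fin n → Bool) × Bool)
    (f : Idx n m k ⊕ S) (hf : grp f ≠ some j) :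
    fval (asg a b c d (flipt j t)) f = fval (asg a b c d t) f := by
  unfold flipt
  split
  case isTrue h =>
    match f with
    | .inr s => rfl
    | .inl (.inr w) => rfl
    | .inl (.inl z) =>
      have hz : z.1 ≠ ⟨j, h⟩ := fun e => hf (by simp [grp, e])
      simp [asg, fval, Function.update_of_ne hz]
  case isFalse h =>
    have hj : j = Fin.last n := by
      apply Fin.ext
      have := j.isLt
      simp [Fin.last]; omega
    match f with
    | .inr s => rfl
    | .inl (.inl z) => rfl
    | .inl (.inr w) => exact absurd (by simp [grp, hj]) hf

lemma mono_sum (hpow : ∀ f : Fin (n + 1) → S, finProd f = 0)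
    (M : (Idx n m k ⊕ S) × List (Idx n m k ⊕ S)) (hlen : M.2.length < n) (ε : ZMod 2) :
    ∑ t ∈ Finset.univ.filter (fun t => par t = ε), mval (asg a b c d t) M =
    ∑ t ∈ Finset.univ.filter (fun t => par t = ε + 1), mval (asg a b c d t) M := by
  obtain ⟨j, hj⟩ := exists_unused M hlen
  apply Finset.sum_nbij' (flipt j) (flipt j)
  · intro t ht
    simp only [Finset.mem_filter, Finset.mem_univ, true_and] at ht ⊢
    rw [par_flipt, ht]
  · intro t ht
    simp only [Finset.mem_filter, Finset.mem_univ, true_and] at ht ⊢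
    rw [par_flipt, ht]
    have h2 : (2:ZMod 2) = 0 := by decide
    linear_combination h2
  · intro t _; exact flipt_flipt j t
  · intro t _; exact flipt_flipt j t
  · intro t _
    exact (mval_congr _ _ M (fun f hf => fval_asg_flipt a b c d j t f (hj f hf))).symm

lemma finset_sum_listsum {α β : Type*} (s : Finset β) (L : List α) (f : α → β → S) :
    ∑ t ∈ s, (L.map (fun M => f M t)).sum = (L.map (fun M => ∑ t ∈ s, f M t)).sum := by
  induction L with
  | nil => simp
  | cons M L ih => simp [Finset.sum_add_distrib, ih]

end main
end SNP

/-- An additively cancellative hemiring with `S^{n+1} = {0}` (`n ≥ 1`)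
satisfies the `(n+1)`-ary term condition `C(1,…,1;0)` (is `n`-supernilpotent). -/
theorem supernilpotent_of_cancellative_nilpotent {S : Type*} [NonUnitalSemiring S]
    (n : ℕ) (hn : 1 ≤ n)
    (hcanc : ∀ a c d : S, a + c = a + d → c = d)
    (hpow : ∀ f : Fin (n + 1) → S, finProd f = 0)
    (k : Fin n → ℕ) (m : ℕ)
    (p : (((Σ i : Fin n, Fin (k i)) ⊕ Fin m) → S) → S)
    (hp : IsPolyFn S ((Σ i : Fin n, Fin (k i)) ⊕ Fin m) p)
    (a b : ∀ i : Fin n, Fin (k i) → S) (c d : Fin m → S)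
    (hyp : ∀ v : Fin n → Bool, v ≠ (fun _ => true) →
      p (Sum.elim (fun z => if v z.1 then b z.1 z.2 else a z.1 z.2) c) =
        p (Sum.elim (fun z => if v z.1 then b z.1 z.2 else a z.1 z.2) d)) :
    p (Sum.elim (fun z => b z.1 z.2) c) = p (Sum.elim (fun z => b z.1 z.2) d) := by
  classical
  have h2 : (2 : ZMod 2) = 0 := by decide
  obtain ⟨L, hL⟩ := SNP.exists_normal p hp
  set L' := L.filter (fun M => M.2.length < n) with hL'def
  have hLval : ∀ x, p x = SNP.pval x L' := fun x => by
    rw [hL x, SNP.pval_filter hpow]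
  set F : (Fin n → Bool) × Bool → S := fun t => p (SNP.asg a b c d t) with hF
  -- the alternating-sum identity
  have main : ∀ ε : ZMod 2,
      ∑ t ∈ Finset.univ.filter (fun t => SNP.par t = ε), F t =
      ∑ t ∈ Finset.univ.filter (fun t => SNP.par t = ε + 1), F t := by
    intro ε
    calc ∑ t ∈ Finset.univ.filter (fun t => SNP.par t = ε), F t
        = ∑ t ∈ Finset.univ.filter (fun t => SNP.par t = ε),
            (L'.map (fun M => SNP.mval (SNP.asg a b c d t) M)).sum :=
          Finset.sum_congr rfl (fun t _ => hLval _)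
      _ = (L'.map (fun M => ∑ t ∈ Finset.univ.filter (fun t => SNP.par t = ε),
            SNP.mval (SNP.asg a b c d t) M)).sum := SNP.finset_sum_listsum _ _ _
      _ = (L'.map (fun M => ∑ t ∈ Finset.univ.filter (fun t => SNP.par t = ε + 1),
            SNP.mval (SNP.asg a b c d t) M)).sum := by
          refine congrArg List.sum (List.map_congr_left fun M hM => ?_)
          exact SNP.mono_sum a b c d hpow M (by simpa using (List.mem_filter.mp hM).2) ε
      _ = ∑ t ∈ Finset.univ.filter (fun t => SNP.par t = ε + 1),
            (L'.map (fun M => SNP.mval (SNP.asg a b c d t) M)).sum :=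
          (SNP.finset_sum_listsum _ _ _).symm
      _ = ∑ t ∈ Finset.univ.filter (fun t => SNP.par t = ε + 1), F t :=
          Finset.sum_congr rfl (fun t _ => (hLval _).symm)
  set t₁ : (Fin n → Bool) × Bool := (fun _ => true, true) with ht₁
  set t₀ : (Fin n → Bool) × Bool := (fun _ => true, false) with ht₀
  set ε : ZMod 2 := SNP.par t₁ with hε
  have hflipsnd : ∀ t : (Fin n → Bool) × Bool, SNP.par (t.1, !t.2) = SNP.par t + 1 := by
    intro t
    have := SNP.par_flipt (Fin.last n) t
    rwa [SNP.flipt, dif_neg (by simp)] at this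
  have hpar0 : SNP.par t₀ = ε + 1 := by
    have := hflipsnd t₁
    exact this
  have hεne : ε ≠ ε + 1 := by
    intro e
    have : (1 : ZMod 2) = 0 := (left_eq_add.mp e)
    exact absurd this (by decide)
  have key : ∀ v : Fin n → Bool, v ≠ (fun _ => true) → F (v, true) = F (v, false) := by
    intro v hv
    have e₁ : SNP.asg a b c d (v, true) =
        Sum.elim (fun z : Σ i : Fin n, Fin (k i) => if v z.1 then b z.1 z.2 else a z.1 z.2) c := by
      funext x; cases x <;> simp [SNP.asg]
    have e₂ : SNP.asg a b c d (v, false) =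
        Sum.elim (fun z : Σ i : Fin n, Fin (k i) => if v z.1 then b z.1 z.2 else a z.1 z.2) d := by
      funext x; cases x <;> simp [SNP.asg]
    show p _ = p _
    rw [e₁, e₂]
    exact hyp v hv
  have ht₁mem : t₁ ∈ Finset.univ.filter (fun t => SNP.par t = ε) := by simp [hε]
  have ht₀mem : t₀ ∈ Finset.univ.filter (fun t => SNP.par t = ε + 1) := by simp [hpar0]
  have hR : ∑ t ∈ (Finset.univ.filter (fun t => SNP.par t = ε)).erase t₁, F t =
      ∑ t ∈ (Finset.univ.filter (fun t => SNP.par t = ε + 1)).erase t₀, F t := by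
    apply Finset.sum_nbij' (fun t => (t.1, !t.2)) (fun t => (t.1, !t.2))
    · intro t ht
      rw [Finset.mem_erase, Finset.mem_filter] at ht ⊢
      obtain ⟨htne, _, htp⟩ := ht
      refine ⟨?_, Finset.mem_univ _, by rw [hflipsnd, htp]⟩
      intro e
      apply htne
      have e1 : t.1 = fun _ => true := congrArg Prod.fst e
      have e2 : (!t.2) = false := congrArg Prod.snd e
      have e2' : t.2 = true := by simpa using e2
      rw [ht₁, ← e1, ← e2']
    · intro t ht
      rw [Finset.mem_erase, Finset.mem_filter] at ht ⊢
      obtain ⟨htne, _, htp⟩ := ht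
      refine ⟨?_, Finset.mem_univ _, by rw [hflipsnd, htp]; linear_combination h2⟩
      intro e
      apply htne
      have e1 : t.1 = fun _ => true := congrArg Prod.fst e
      have e2 : (!t.2) = true := congrArg Prod.snd e
      have e2' : t.2 = false := by simpa using e2
      rw [ht₀, ← e1, ← e2']
    · intro t _; simp
    · intro t _; simp
    · rintro ⟨tv, tb⟩ ht
      rw [Finset.mem_erase, Finset.mem_filter] at ht
      obtain ⟨htne, _, htp⟩ := ht
      have hv : tv ≠ fun _ => true := by
        intro e1
        rcases tb with _ | _
        · have et : ((tv, false) : (Fin n → Bool) × Bool) = t₀ := by rw [ht₀, e1]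
          rw [et] at htp
          exact hεne (htp.symm.trans hpar0)
        · exact htne (by rw [ht₁, e1])
      rcases tb with _ | _
      · exact (key tv hv).symm
      · exact key tv hv
  have split₁ := (Finset.add_sum_erase _ F ht₁mem).symm
  have split₀ := (Finset.add_sum_erase _ F ht₀mem).symm
  have main' := main ε
  rw [split₁, split₀, hR] at main'
  have hFeq : F t₁ = F t₀ := by
    apply hcanc (∑ t ∈ (Finset.univ.filter (fun t => SNP.par t = ε + 1)).erase t₀, F t)
    rw [add_comm _ (F t₁), add_comm _ (F t₀)]
    exact main'
  have e₁ : SNP.asg a b c d t₁ = Sum.elim (fun z : Σ i : Fin n, Fin (k i) => b z.1 z.2) c := by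
    funext x; cases x <;> simp [SNP.asg, ht₁]
  have e₀ : SNP.asg a b c d t₀ = Sum.elim (fun z : Σ i : Fin n, Fin (k i) => b z.1 z.2) d := by
    funext x; cases x <;> simp [SNP.asg, ht₀]
  rw [← e₁, ← e₀]
  exact hFeq
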